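/- Let ρ̂ > 0 and C > 0, and let l : (0, ρ̂] → ℝ be locally absolutely continuous with l(ρ) > 0 for all ρ ∈ (0, ρ̂] and |l'(ρ)| ≤ C·l(ρ)² for almost every ρ ∈ (0, ρ̂]. Then for every ρ ∈ (0, ρ̂], l(ρ) ≤ l(ρ̂)·exp(C·∫_ρ^ρ̂ l(t) dt). -/
import Mathlib


noncomputable section
open MeasureTheory Set

/-- `l` is locally absolutely continuous on `(0, ρ̂]` with almost-everywhere
derivative `l'`: on every compact subinterval `[a, b] ⊆ (0, ρ̂]` the derivative `l'`
is integrable and the fundamental theorem of calculus `l b − l a = ∫_a^b l'` holds. -/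
def LocAbsolutelyContinuousOnIoc (l l' : ℝ → ℝ) (ρmax : ℝ) : Prop :=
  (∀ a ∈ Set.Ioc (0:ℝ) ρmax, IntegrableOn l' (Set.Icc a ρmax) volume) ∧
    ∀ a ∈ Set.Ioc (0:ℝ) ρmax, ∀ b ∈ Set.Ioc (0:ℝ) ρmax,
      l b = l a + ∫ t in a..b, l' t

/-- If `l > 0` is locally absolutely continuous on `(0, ρ̂]` with
`|l'| ≤ C·l²` a.e., then `l(ρ) ≤ l(ρ̂)·exp(C·∫_ρ^ρ̂ l)` for all `ρ ∈ (0, ρ̂]`. -/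
theorem slow_decay_upper_bound
    (ρmax C : ℝ) (hρ : 0 < ρmax) (hC : 0 < C)
    (l l' : ℝ → ℝ)
    (hpos : ∀ ρ ∈ Set.Ioc (0:ℝ) ρmax, 0 < l ρ)
    (hac : LocAbsolutelyContinuousOnIoc l l' ρmax)
    (hbound : ∀ᵐ ρ ∂(volume.restrict (Set.Ioc (0:ℝ) ρmax)), |l' ρ| ≤ C * (l ρ) ^ 2) :
    ∀ ρ ∈ Set.Ioc (0:ℝ) ρmax,
      l ρ ≤ l ρmax * Real.exp (C * ∫ t in ρ..ρmax, l t) := by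
  rintro ρ ⟨hρ0, hρle⟩
  have hρmem : ρ ∈ Set.Ioc (0:ℝ) ρmax := ⟨hρ0, hρle⟩
  have hρmaxmem : ρmax ∈ Set.Ioc (0:ℝ) ρmax := ⟨hρ, le_rfl⟩
  have hsub : Icc ρ ρmax ⊆ Ioc 0 ρmax := fun x hx => ⟨hρ0.trans_le hx.1, hx.2⟩
  -- integrability of l'
  have hl'int : IntegrableOn l' (Icc ρ ρmax) volume := hac.1 ρ hρmem
  have hl'ii : ∀ a ∈ Icc ρ ρmax, IntervalIntegrable l' volume a ρmax := by
    intro a ha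
    have : IntegrableOn l' (Icc a ρmax) volume := hl'int.mono_set (Icc_subset_Icc ha.1 le_rfl)
    rw [← uIcc_of_le ha.2] at this
    exact this.intervalIntegrable
  -- continuity of l on [ρ, ρmax]
  have hlrep : ∀ x ∈ Icc ρ ρmax, l x = l ρ + ∫ t in ρ..x, l' t :=
    fun x hx => hac.2 ρ hρmem x (hsub hx)
  have hprim : ContinuousOn (fun x => ∫ t in ρ..x, l' t) (Icc ρ ρmax) := by
    have := intervalIntegral.continuousOn_primitive_interval
      (f := l') (a := ρ) (b := ρmax) (μ := volume) (by rwa [uIcc_of_le hρle])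
    rwa [uIcc_of_le hρle] at this
  have hlcont : ContinuousOn l (Icc ρ ρmax) :=
    (continuousOn_const.add hprim).congr hlrep
  have hl2cont : ContinuousOn (fun t => l t ^ 2) (Icc ρ ρmax) := hlcont.pow 2
  have hlnn : ∀ x ∈ Icc ρ ρmax, 0 ≤ l x := fun x hx => (hpos x (hsub hx)).le
  -- interval integrability of l and l² on subintervals
  have hlii : ∀ a ∈ Icc ρ ρmax, IntervalIntegrable l volume a ρmax := by
    intro a ha
    exact (hlcont.mono (Icc_subset_Icc ha.1 le_rfl)).intervalIntegrable_of_Icc ha.2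
  have hl2ii : ∀ a ∈ Icc ρ ρmax, IntervalIntegrable (fun t => l t ^ 2) volume a ρmax := by
    intro a ha
    exact (hl2cont.mono (Icc_subset_Icc ha.1 le_rfl)).intervalIntegrable_of_Icc ha.2
  -- the key integral inequality : l a ≤ l ρmax + C ∫_a^ρmax l²
  have hkey : ∀ a ∈ Icc ρ ρmax, l a ≤ l ρmax + C * ∫ t in a..ρmax, l t ^ 2 := by
    intro a ha
    have hrep := hac.2 a (hsub ha) ρmax hρmaxmem
    have hmono : (∫ t in a..ρmax, -(C * l t ^ 2)) ≤ ∫ t in a..ρmax, l' t := by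
      apply intervalIntegral.integral_mono_ae_restrict ha.2
        ((hl2ii a ha).const_mul C).neg (hl'ii a ha)
      have hsub2 : Icc a ρmax ⊆ Ioc 0 ρmax := (Icc_subset_Icc ha.1 le_rfl).trans hsub
      have hb : ∀ᵐ t ∂(volume.restrict (Icc a ρmax)), |l' t| ≤ C * l t ^ 2 :=
        ae_restrict_of_ae_restrict_of_subset hsub2 hbound
      filter_upwards [hb] with t ht
      simp only [Pi.neg_apply]
      have := neg_abs_le (l' t)
      linarith
    rw [intervalIntegral.integral_neg, intervalIntegral.integral_const_mul] at hmono
    linarith [hrep]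
  -- the auxiliary functions
  set P : ℝ → ℝ := fun a => ∫ t in a..ρmax, l t ^ 2 with hP
  set Q : ℝ → ℝ := fun a => ∫ t in a..ρmax, l t with hQ
  set Φ : ℝ → ℝ := fun a => (l ρmax + C * P a) * Real.exp (-(C * Q a)) with hΦ
  -- continuity of P, Q on [ρ, ρmax]
  have hPcont : ContinuousOn P (Icc ρ ρmax) := by
    have := intervalIntegral.continuousOn_primitive_interval_left
      (f := fun t => l t ^ 2) (a := ρ) (b := ρmax) (μ := volume)
      (by rw [uIcc_of_le hρle]; exact hl2cont.integrableOn_Icc)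
    rwa [uIcc_of_le hρle] at this
  have hQcont : ContinuousOn Q (Icc ρ ρmax) := by
    have := intervalIntegral.continuousOn_primitive_interval_left
      (f := l) (a := ρ) (b := ρmax) (μ := volume)
      (by rw [uIcc_of_le hρle]; exact hlcont.integrableOn_Icc)
    rwa [uIcc_of_le hρle] at this
  have hΦcont : ContinuousOn Φ (Icc ρ ρmax) :=
    (continuousOn_const.add (continuousOn_const.mul hPcont)).mul
      (((continuousOn_const.mul hQcont).neg).rexp)
  -- derivatives at interior points
  have hmeasP : ∀ a ∈ Ioo ρ ρmax, HasDerivAt P (-(l a ^ 2)) a := by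
    intro a ha
    have hmem : Icc ρ ρmax ∈ nhds a := Icc_mem_nhds ha.1 ha.2
    refine intervalIntegral.integral_hasDerivAt_left (hl2ii a ⟨ha.1.le, ha.2.le⟩) ?_ ?_
    · exact ⟨Icc ρ ρmax, hmem,
        (hl2cont.aestronglyMeasurable measurableSet_Icc)⟩
    · exact hl2cont.continuousAt hmem
  have hmeasQ : ∀ a ∈ Ioo ρ ρmax, HasDerivAt Q (-(l a)) a := by
    intro a ha
    have hmem : Icc ρ ρmax ∈ nhds a := Icc_mem_nhds ha.1 ha.2
    refine intervalIntegral.integral_hasDerivAt_left (hlii a ⟨ha.1.le, ha.2.le⟩) ?_ ?_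
    · exact ⟨Icc ρ ρmax, hmem,
        (hlcont.aestronglyMeasurable measurableSet_Icc)⟩
    · exact hlcont.continuousAt hmem
  have hΦderiv : ∀ a ∈ Ioo ρ ρmax, HasDerivAt Φ
      ((C * -(l a ^ 2)) * Real.exp (-(C * Q a)) +
        (l ρmax + C * P a) * (Real.exp (-(C * Q a)) * -(C * -(l a)))) a := by
    intro a ha
    have h1 : HasDerivAt (fun x => l ρmax + C * P x) (C * -(l a ^ 2)) a :=
      ((hmeasP a ha).const_mul C).const_add (l ρmax)
    have h2 : HasDerivAt (fun x => Real.exp (-(C * Q x)))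
        (Real.exp (-(C * Q a)) * -(C * -(l a))) a :=
      (((hmeasQ a ha).const_mul C).neg).exp
    exact h1.mul h2
  -- monotonicity of Φ
  have hmono : MonotoneOn Φ (Icc ρ ρmax) := by
    apply monotoneOn_of_deriv_nonneg (convex_Icc ρ ρmax) hΦcont
    · intro a ha
      rw [interior_Icc] at ha
      exact (hΦderiv a ha).differentiableAt.differentiableWithinAt
    · intro a ha
      rw [interior_Icc] at ha
      rw [(hΦderiv a ha).deriv]
      have hla : 0 ≤ l a := hlnn a ⟨ha.1.le, ha.2.le⟩
      have hk := hkey a ⟨ha.1.le, ha.2.le⟩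
      have hexp : (0:ℝ) < Real.exp (-(C * Q a)) := Real.exp_pos _
      nlinarith [mul_nonneg (mul_nonneg hC.le hla) (sub_nonneg.mpr hk)]
  -- conclude
  have hle : Φ ρ ≤ Φ ρmax := hmono ⟨le_rfl, hρle⟩ ⟨hρle, le_rfl⟩ hρle
  have hPm : P ρmax = 0 := intervalIntegral.integral_same
  have hQm : Q ρmax = 0 := intervalIntegral.integral_same
  have hΦm : Φ ρmax = l ρmax := by simp [hΦ, hPm, hQm]
  rw [hΦm] at hle
  have hexp : (0:ℝ) < Real.exp (-(C * Q ρ)) := Real.exp_pos _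
  have h1 : l ρ ≤ l ρmax + C * P ρ := hkey ρ ⟨le_rfl, hρle⟩
  have h2 : (l ρmax + C * P ρ) * Real.exp (-(C * Q ρ)) ≤ l ρmax := hle
  have h3 : l ρmax + C * P ρ ≤ l ρmax * Real.exp (C * Q ρ) := by
    have := mul_le_mul_of_nonneg_right h2 (Real.exp_pos (C * Q ρ)).le
    rwa [mul_assoc, ← Real.exp_add, neg_add_cancel, Real.exp_zero, mul_one] at this
  calc l ρ ≤ l ρmax + C * P ρ := h1
    _ ≤ l ρmax * Real.exp (C * Q ρ) := h3
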